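/- For every natural number r, the rows of M_r are linearly independent over ℚ; equivalently, the rank of M_r (viewed as a rational matrix) equals its number of rows, 3^{r+1} − 1. -/

import Mathlib

/-- Entries of the 2×3 matrix `M₀` with rows (1,0,1) and (0,1,1), as a function on ℕ. -/
def M0nat : ℕ → ℕ → ℤ
  | 0, 0 => 1
  | 0, 1 => 0
  | 0, 2 => 1
  | 1, 0 => 0
  | 1, 1 => 1
  | 1, 2 => 1
  | _, _ => 0

/-- Entries of the matrix `M_r` (with `3^(r+1) - 1` rows and `3^(r+1)` columns):
`M_0` is as above, and `M_{r+1}` is the vertical stack of `M_r ⊗ (1,1,1)`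
(first `3^(r+1) - 1` rows) and `I_{3^(r+1)} ⊗ M_0` (remaining `2·3^(r+1)` rows).
In the Kronecker product, row/column pairs are ordered lexicographically, i.e.
`(A ⊗ B) (p·i + s) (q·j + t) = A i j * B s t` for `B` of size `p × q`. -/
def Mnat : ℕ → ℕ → ℕ → ℤ
  | 0, i, j => M0nat i j
  | r + 1, i, j =>
    if i < 3 ^ (r + 1) - 1 then
      -- block `M_r ⊗ (1,1,1)`
      Mnat r i (j / 3)
    else
      -- block `I_{3^(r+1)} ⊗ M_0`
      if (i - (3 ^ (r + 1) - 1)) / 2 = j / 3 then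
        M0nat ((i - (3 ^ (r + 1) - 1)) % 2) (j % 3)
      else 0

/-- The matrix `M_r`. -/
def Mmat (r : ℕ) : Matrix (Fin (3 ^ (r + 1) - 1)) (Fin (3 ^ (r + 1))) ℤ :=
  Matrix.of fun i j => Mnat r i.val j.val

/-- Components of the vector `k_r` of length `3^(r+1)`:
`k_0 = (1,1,-1)` and `k_{r+1} = (k_r, k_r, -k_r)`. -/
def knat : ℕ → ℕ → ℤ
  | 0, j => if j = 2 then -1 else 1
  | r + 1, j => if j < 2 * 3 ^ (r + 1) then knat r (j % 3 ^ (r + 1)) else -knat r (j % 3 ^ (r + 1))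

/-- The vector `k_r`. -/
def kvec (r : ℕ) : Fin (3 ^ (r + 1)) → ℤ := fun j => knat r j.val

/-- For every natural number `r`, the rows of `M_r` are linearly independent over ℚ;
equivalently, the rank of `M_r` viewed as a rational matrix equals its number of rows,
`3^(r+1) - 1`. -/
lemma Mnat_key : ∀ (r : ℕ) (g : ℕ → ℚ),
    (∀ j < 3 ^ (r + 1), ∑ i ∈ Finset.range (3 ^ (r + 1) - 1), g i * (Mnat r i j : ℚ) = 0) →
    ∀ i < 3 ^ (r + 1) - 1, g i = 0 := by
  intro r
  induction r with
  | zero =>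
    intro g h i hi
    have h0 := h 0 (by norm_num)
    have h1 := h 1 (by norm_num)
    norm_num [Finset.sum_range_succ, Mnat, M0nat] at h0 h1
    interval_cases i <;> assumption
  | succ r ih =>
    intro g h
    set N := 3 ^ (r + 1) with hNdef
    have hNpos : 0 < N := by positivity
    have hpow : 3 ^ (r + 1 + 1) = 3 * N := by rw [hNdef, pow_succ]; ring
    have hsplit : 3 ^ (r + 1 + 1) - 1 = (N - 1) + 2 * N := by omega
    have main : ∀ b < N, (∑ i ∈ Finset.range (N - 1), g i * (Mnat r i b : ℚ)) = 0 ∧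
        g (N - 1 + 2 * b) = 0 ∧ g (N - 1 + (2 * b + 1)) = 0 := by
      intro b hb
      have hEq : ∀ t < 3,
          (∑ i ∈ Finset.range (N - 1), g i * (Mnat r i b : ℚ))
            + g (N - 1 + 2 * b) * (M0nat 0 t : ℚ)
            + g (N - 1 + (2 * b + 1)) * (M0nat 1 t : ℚ) = 0 := by
        intro t ht
        have hj : 3 * b + t < 3 ^ (r + 1 + 1) := by omega
        have E := h (3 * b + t) hj
        rw [hsplit, Finset.sum_range_add] at E
        have hfst : ∀ i ∈ Finset.range (N - 1),
            g i * (Mnat (r + 1) i (3 * b + t) : ℚ) = g i * (Mnat r i b : ℚ) := by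
          intro i hi
          rw [Finset.mem_range] at hi
          have hm : Mnat (r + 1) i (3 * b + t) = Mnat r i b := by
            simp only [Mnat]
            rw [if_pos (by omega)]
            congr 1
            omega
          rw [hm]
        rw [Finset.sum_congr rfl hfst] at E
        have hsnd : ∀ s ∈ Finset.range (2 * N),
            g (N - 1 + s) * (Mnat (r + 1) (N - 1 + s) (3 * b + t) : ℚ)
              = g (N - 1 + s) * (if s / 2 = b then (M0nat (s % 2) t : ℚ) else 0) := by
          intro s hs
          congr 1
          simp only [Mnat]
          rw [if_neg (by omega)]
          have h1 : (N - 1 + s) - (3 ^ (r + 1) - 1) = s := by omega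
          have h2 : (3 * b + t) / 3 = b := by omega
          have h3 : (3 * b + t) % 3 = t := by omega
          rw [h1, h2, h3]
          split <;> simp
        rw [Finset.sum_congr rfl hsnd] at E
        have hpair : ∑ x ∈ Finset.range (2 * N),
            g (N - 1 + x) * (if x / 2 = b then (M0nat (x % 2) t : ℚ) else 0)
            = g (N - 1 + 2 * b) * (M0nat 0 t : ℚ)
              + g (N - 1 + (2 * b + 1)) * (M0nat 1 t : ℚ) := by
          rw [Finset.sum_eq_add (2 * b) (2 * b + 1) (by omega)
            (fun c _ hc => by rw [if_neg (by omega), mul_zero])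
            (fun hc => absurd (Finset.mem_range.mpr (by omega)) hc)
            (fun hc => absurd (Finset.mem_range.mpr (by omega)) hc)]
          have d1 : 2 * b / 2 = b := by omega
          have d2 : 2 * b % 2 = 0 := by omega
          have d3 : (2 * b + 1) / 2 = b := by omega
          have d4 : (2 * b + 1) % 2 = 1 := by omega
          rw [d1, d2, d3, d4, if_pos rfl, if_pos rfl]
        rw [hpair] at E
        linarith [E]
      have e0 := hEq 0 (by norm_num)
      have e1 := hEq 1 (by norm_num)
      have e2 := hEq 2 (by norm_num)
      norm_num [M0nat] at e0 e1 e2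
      refine ⟨by linarith, by linarith, by linarith⟩
    have hzero : ∀ i < N - 1, g i = 0 := by
      apply ih g
      intro j hj
      exact (main j hj).1
    intro i hi
    by_cases hc : i < N - 1
    · exact hzero i hc
    · obtain ⟨hS, h0, h1⟩ := main ((i - (N - 1)) / 2) (by omega)
      rcases Nat.mod_two_eq_zero_or_one (i - (N - 1)) with hm | hm
      · have he : i = N - 1 + 2 * ((i - (N - 1)) / 2) := by omega
        rw [he]; exact h0
      · have he : i = N - 1 + (2 * ((i - (N - 1)) / 2) + 1) := by omega
        rw [he]; exact h1

theorem Mmat_rows_linearIndependent (r : ℕ) :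
    LinearIndependent ℚ (fun i => ((Mmat r).map ((↑) : ℤ → ℚ)) i) ∧
      ((Mmat r).map ((↑) : ℤ → ℚ)).rank = 3 ^ (r + 1) - 1 := by
  have hli : LinearIndependent ℚ (fun i => ((Mmat r).map ((↑) : ℤ → ℚ)) i) := by
    rw [Fintype.linearIndependent_iff]
    intro g hg i
    set G : ℕ → ℚ := fun n => if h : n < 3 ^ (r + 1) - 1 then g ⟨n, h⟩ else 0 with hG
    have hz : G i.val = 0 := by
      refine Mnat_key r G ?_ i.val i.isLt
      intro j hj
      have h2 := congrFun hg ⟨j, hj⟩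
      simp only [Finset.sum_apply, Pi.smul_apply, smul_eq_mul, Pi.zero_apply] at h2
      rw [← Fin.sum_univ_eq_sum_range (fun n => G n * (Mnat r n j : ℚ))]
      rw [← h2]
      apply Finset.sum_congr rfl
      intro x _
      simp [hG, x.isLt, Mmat, Matrix.map_apply]
    simpa [hG, i.isLt] using hz
  refine ⟨hli, ?_⟩
  have h := hli.rank_matrix
  simp only [Fintype.card_fin] at h
  exact h
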